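/- Fix M ≥ 1, v₀ > 0, ionic volumes v_j > 0, valences z_j ∈ ℝ, β > 0, e > 0, bulk concentrations c_j^∞ > 0 with γ^∞ := 1 − Σ_{j=1}^M v_j c_j^∞ ∈ (0,1), and ψ ∈ ℝ. Then the function f(γ) = γ − 1 + Σ_{j=1}^M v_j c_j^∞ (γ/γ^∞)^{v_j/v₀} exp(−β z_j e ψ) is strictly monotonically increasing on [0, ∞), with f(0) = −1 < 0 and f(1) > 0. -/
import Mathlib


open scoped BigOperators

/-- The function
`f(γ) = γ − 1 + ∑ j, v j * c∞ j * (γ/G)^(v j / v₀) * exp(−β z_j e ψ)`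
is strictly monotonically increasing on `[0, ∞)`, with `f(0) = −1 < 0` and `f(1) > 0`. -/
theorem strictMono_solvent_fraction_fn
    (M : ℕ) (hM : 1 ≤ M) (v₀ : ℝ) (hv₀ : 0 < v₀)
    (v z cinf : Fin M → ℝ) (hv : ∀ j, 0 < v j)
    (β e : ℝ) (hβ : 0 < β) (he : 0 < e)
    (hcinf : ∀ j, 0 < cinf j) (hsum : ∑ j, v j * cinf j < 1) (ψ : ℝ)
    (f : ℝ → ℝ)
    (hf : ∀ γ : ℝ, f γ =
      γ - 1 + ∑ j, v j * cinf j * (γ / (1 - ∑ i, v i * cinf i)) ^ (v j / v₀) *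
        Real.exp (-(β * z j * e * ψ))) :
    StrictMonoOn f (Set.Ici (0 : ℝ)) ∧ f 0 = -1 ∧ f 0 < 0 ∧ 0 < f 1 := by
  set G : ℝ := 1 - ∑ i, v i * cinf i with hG
  have hGpos : 0 < G := by simp [hG]; linarith
  have hp : ∀ j, 0 < v j / v₀ := fun j => div_pos (hv j) hv₀
  constructor
  · intro a ha b hb hab
    rw [hf a, hf b]
    have hterm : ∀ j ∈ Finset.univ,
        v j * cinf j * (a / G) ^ (v j / v₀) * Real.exp (-(β * z j * e * ψ)) ≤
        v j * cinf j * (b / G) ^ (v j / v₀) * Real.exp (-(β * z j * e * ψ)) := by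
      intro j _
      have h1 : (a / G) ^ (v j / v₀) ≤ (b / G) ^ (v j / v₀) :=
        Real.rpow_le_rpow (div_nonneg ha hGpos.le)
          (by gcongr) (hp j).le
      have h2 : 0 ≤ v j * cinf j := (mul_pos (hv j) (hcinf j)).le
      have := mul_le_mul_of_nonneg_left h1 h2
      exact mul_le_mul_of_nonneg_right this (Real.exp_pos _).le
    have hsumle := Finset.sum_le_sum hterm
    linarith
  · have hf0 : f 0 = -1 := by
      rw [hf 0]
      have : ∀ j : Fin M,
          v j * cinf j * ((0:ℝ) / G) ^ (v j / v₀) * Real.exp (-(β * z j * e * ψ)) = 0 := by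
        intro j
        rw [zero_div, Real.zero_rpow (ne_of_gt (hp j))]
        ring
      rw [Finset.sum_congr rfl fun j _ => this j]
      simp
    refine ⟨hf0, by rw [hf0]; norm_num, ?_⟩
    rw [hf 1]
    have hpos : 0 < ∑ j, v j * cinf j * ((1:ℝ) / G) ^ (v j / v₀) *
        Real.exp (-(β * z j * e * ψ)) := by
      apply Finset.sum_pos
      · intro j _
        exact mul_pos (mul_pos (mul_pos (hv j) (hcinf j))
          (Real.rpow_pos_of_pos (by positivity) _)) (Real.exp_pos _)
      · haveI : NeZero M := ⟨Nat.pos_iff_ne_zero.mp hM⟩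
        exact Finset.univ_nonempty
    linarith
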